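/- arXiv:2012.07720 — 5 statements merged into one kernel-verified Lean document; each statement's English description precedes it below -/
import Mathlib

section
/- Let s₁ > 0 and h > 0 with h² ≤ s₁², let N : ℝ → ℝ be continuous with N(0) = 0 and N(s₁) = −h², set W(s) = ½s² + N(s) and ω̄² = 1 − h²/s₁². For r ≥ 1 define the radial test function u_r : ℝ³ → ℝ by u_r(x) = s₁ if |x| ≤ r, u_r(x) = s₁(r + 1 − |x|) if r < |x| < r+1, and u_r(x) = 0 if |x| ≥ r+1, and define F[u] = ½∫_{ℝ³}|∇u|²dx + ∫_{ℝ³}(W(u) − ½ω̄²u²)dx. Then there is a constant C₁ > 0, depending only on s₁ and sup_{s∈[0,s₁]}|N(s)|, such that F[u_r] ≤ C₁ r² − (2/3)π r³ h² for every r ≥ 1. In particular F[u_r] → −∞ as r → ∞. -/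
open MeasureTheory Real Filter

/-- Physical space `ℝ³`. -/
abbrev R3 : Type := Fin 3 → ℝ

/-- Partial derivative `∂_{x_i}` of a function on space `ℝ³`. -/
noncomputable def pd (i : Fin 3) (f : R3 → ℝ) (x : R3) : ℝ :=
  fderiv ℝ f x (Pi.single i 1)

noncomputable def nrm (x : R3) : ℝ := Real.sqrt (∑ i, (x i) ^ 2)

lemma nrm_continuous : Continuous nrm := by
  unfold nrm; fun_prop

lemma nrm_nonneg (x : R3) : 0 ≤ nrm x := Real.sqrt_nonneg _

lemma nrm_lip (x y : R3) : |nrm x - nrm y| ≤ 3 * dist x y := by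
  set x' : EuclideanSpace ℝ (Fin 3) := (WithLp.equiv 2 _).symm x
  set y' : EuclideanSpace ℝ (Fin 3) := (WithLp.equiv 2 _).symm y
  have hx : nrm x = ‖x'‖ := by
    rw [EuclideanSpace.norm_eq]
    simp [nrm, x', sq_abs]
  have hy : nrm y = ‖y'‖ := by
    rw [EuclideanSpace.norm_eq]
    simp [nrm, y', sq_abs]
  have h1 : |nrm x - nrm y| ≤ ‖x' - y'‖ := by
    rw [hx, hy]; exact abs_norm_sub_norm_le _ _
  have h2 : ‖x' - y'‖ ≤ 3 * dist x y := by
    rw [EuclideanSpace.norm_eq]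
    have hsum : (∑ i, ‖(x' - y') i‖ ^ 2) ≤ ∑ _i : Fin 3, (dist x y)^2 := by
      apply Finset.sum_le_sum
      intro i _
      have : (x' - y') i = x i - y i := rfl
      rw [this, Real.norm_eq_abs, sq_abs]
      have := dist_le_pi_dist x y i
      rw [Real.dist_eq] at this
      nlinarith [abs_nonneg (x i - y i), le_abs_self (x i - y i), neg_abs_le (x i - y i)]
    calc Real.sqrt (∑ i, ‖(x' - y') i‖ ^ 2) ≤ Real.sqrt (∑ _i : Fin 3, (dist x y)^2) :=
          Real.sqrt_le_sqrt hsum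
      _ = Real.sqrt ((3 * dist x y)^2 - 6 * (dist x y)^2) := by
          congr 1; simp [Finset.sum_const]; ring
      _ ≤ 3 * dist x y := by
          have hd : (0:ℝ) ≤ dist x y := dist_nonneg
          nlinarith [Real.sq_sqrt (by nlinarith : (0:ℝ) ≤ (3 * dist x y)^2 - 6 * (dist x y)^2),
            Real.sqrt_nonneg ((3 * dist x y)^2 - 6 * (dist x y)^2)]
  linarith

lemma gamma_calc : Real.sqrt π ^ 3 / Real.Gamma (((3:ℕ):ℝ) / 2 + 1) = 4 * π / 3 := by
  have h1 : Real.Gamma (((3:ℕ):ℝ) / 2 + 1) = 3 / 4 * Real.sqrt π := by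
    push_cast
    rw [Real.Gamma_add_one (by norm_num), show (3:ℝ)/2 = 1/2 + 1 by norm_num,
      Real.Gamma_add_one (by norm_num), Real.Gamma_one_half_eq]
    ring
  have h2 : Real.sqrt π ^ 3 = π * Real.sqrt π := by
    rw [pow_succ, Real.sq_sqrt Real.pi_nonneg]
  have h3 : Real.sqrt π ≠ 0 := by positivity
  rw [h1, h2]
  field_simp

lemma vol_closed (R : ℝ) (hR : 0 ≤ R) :
    volume {x : R3 | nrm x ≤ R} = ENNReal.ofReal ((4/3) * π * R^3) := by
  have hmeas : MeasurableSet {x : R3 | nrm x ≤ R} :=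
    measurableSet_le nrm_continuous.measurable measurable_const
  have hpre : (MeasurableEquiv.toLp 2 (Fin 3 → ℝ)).symm ⁻¹' {x : R3 | nrm x ≤ R}
      = Metric.closedBall (0 : EuclideanSpace ℝ (Fin 3)) R := by
    ext y
    simp only [Set.mem_preimage, Set.mem_setOf_eq, Metric.mem_closedBall, dist_zero_right,
      MeasurableEquiv.coe_toLp, nrm, EuclideanSpace.norm_eq, Real.norm_eq_abs, sq_abs]
    rfl
  have := (EuclideanSpace.volume_preserving_symm_measurableEquiv_toLp (Fin 3)).measure_preimage
    hmeas.nullMeasurableSet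
  rw [← this, hpre, EuclideanSpace.volume_closedBall]
  rw [Fintype.card_fin, gamma_calc, ← ENNReal.ofReal_pow hR, ← ENNReal.ofReal_mul (by positivity)]
  congr 1; ring

lemma vol_open (R : ℝ) (hR : 0 ≤ R) :
    volume {x : R3 | nrm x < R} = ENNReal.ofReal ((4/3) * π * R^3) := by
  have hmeas : MeasurableSet {x : R3 | nrm x < R} :=
    measurableSet_lt nrm_continuous.measurable measurable_const
  have hpre : (MeasurableEquiv.toLp 2 (Fin 3 → ℝ)).symm ⁻¹' {x : R3 | nrm x < R}
      = Metric.ball (0 : EuclideanSpace ℝ (Fin 3)) R := by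
    ext y
    simp only [Set.mem_preimage, Set.mem_setOf_eq, Metric.mem_ball, dist_zero_right,
      MeasurableEquiv.coe_toLp, nrm, EuclideanSpace.norm_eq, Real.norm_eq_abs, sq_abs]
    rfl
  have := (EuclideanSpace.volume_preserving_symm_measurableEquiv_toLp (Fin 3)).measure_preimage
    hmeas.nullMeasurableSet
  rw [← this, hpre, EuclideanSpace.volume_ball]
  rw [Fintype.card_fin, gamma_calc, ← ENNReal.ofReal_pow hR, ← ENNReal.ofReal_mul (by positivity)]
  congr 1; ring

lemma tendsto_aux (C c : ℝ) (hc : 0 < c) :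
    Filter.Tendsto (fun r : ℝ => C * r ^ 2 - c * r ^ 3) Filter.atTop Filter.atBot := by
  have h1 : Tendsto (fun r : ℝ => r ^ 2) atTop atTop :=
    tendsto_pow_atTop (by norm_num : (2:ℕ) ≠ 0)
  have h2 : Tendsto (fun r : ℝ => C + -(c * r)) atTop atBot := by
    apply tendsto_atBot_add_const_left
    exact tendsto_neg_atTop_atBot.comp (Tendsto.const_mul_atTop hc tendsto_id)
  have h3 := h1.atTop_mul_atBot₀ h2
  have heq : (fun r : ℝ => C * r ^ 2 - c * r ^ 3)
      = fun r : ℝ => r ^ 2 * (C + -(c * r)) := by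
    funext r; ring
  rw [heq]
  exact h3

set_option maxHeartbeats 1000000 in
/-- for the radial test functions `u_r` (equal to `s₁` on the ball of radius
`r`, affine in `|x|` in the transition layer `r < |x| < r+1`, and `0` outside), the
functional `F[u] = ½∫|∇u|² + ∫(W(u) − ½ω̄²u²)` satisfies
`F[u_r] ≤ C₁r² − (2/3)πr³h²` for all `r ≥ 1` and some constant `C₁ > 0`;
in particular `F[u_r] → −∞` as `r → ∞`. -/
theorem test_function_energy_estimate
    (s₁ h : ℝ) (hs₁ : 0 < s₁) (hh : 0 < h) (hhs : h ^ 2 ≤ s₁ ^ 2)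
    (N : ℝ → ℝ) (hNc : Continuous N) (hN0 : N 0 = 0) (hNs₁ : N s₁ = -h ^ 2)
    (W : ℝ → ℝ) (hW : ∀ s : ℝ, W s = (1 / 2) * s ^ 2 + N s)
    (ωb : ℝ) (hωb : ωb ^ 2 = 1 - h ^ 2 / s₁ ^ 2)
    (ur : ℝ → R3 → ℝ)
    (hur : ∀ r : ℝ, ∀ x : R3, ur r x =
      if Real.sqrt (∑ i, (x i) ^ 2) ≤ r then s₁
      else if Real.sqrt (∑ i, (x i) ^ 2) < r + 1 then
        s₁ * (r + 1 - Real.sqrt (∑ i, (x i) ^ 2))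
      else 0)
    (F : (R3 → ℝ) → ℝ)
    (hF : ∀ u : R3 → ℝ, F u =
      (1 / 2) * (∫ x : R3, ∑ i, (pd i u x) ^ 2)
        + ∫ x : R3, (W (u x) - (1 / 2) * ωb ^ 2 * (u x) ^ 2)) :
    (∃ C₁ > 0, ∀ r : ℝ, 1 ≤ r → F (ur r) ≤ C₁ * r ^ 2 - (2 / 3) * π * r ^ 3 * h ^ 2)
    ∧ Tendsto (fun r : ℝ => F (ur r)) atTop atBot := by
  have hur' : ∀ r : ℝ, ∀ x : R3, ur r x =
      if nrm x ≤ r then s₁ else if nrm x < r + 1 then s₁ * (r + 1 - nrm x) else 0 :=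
    hur
  -- the potential
  set V : ℝ → ℝ := fun s => W s - (1/2) * ωb^2 * s^2 with hVdef
  have hVeq : V = fun s => (1/2)*s^2 + N s - (1/2)*ωb^2*s^2 := by
    funext s; simp only [hVdef, hW]
  have hVc : Continuous V := by rw [hVeq]; fun_prop
  obtain ⟨M, hM⟩ := (isCompact_Icc : IsCompact (Set.Icc 0 s₁)).exists_bound_of_continuousOn
    hVc.continuousOn
  have hs₁mem : s₁ ∈ Set.Icc (0:ℝ) s₁ := ⟨hs₁.le, le_refl _⟩
  have hM0 : 0 ≤ M := le_trans (norm_nonneg _) (hM s₁ hs₁mem)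
  have hs₁ne : s₁ ≠ 0 := ne_of_gt hs₁
  have hVs₁ : V s₁ = -(h^2)/2 := by
    simp only [hVeq, hNs₁, hωb]
    field_simp
    ring
  have hV0 : V 0 = 0 := by simp [hVeq, hN0]
  -- clamp formula
  have hform : ∀ r : ℝ, ∀ x : R3, ur r x = s₁ * min 1 (max 0 (r + 1 - nrm x)) := by
    intro r x
    rw [hur']
    rcases le_or_gt (nrm x) r with hc | hc
    · rw [if_pos hc, max_eq_right (by linarith), min_eq_left (by linarith), mul_one]
    · rw [if_neg (not_le.2 hc)]
      rcases lt_or_ge (nrm x) (r+1) with hc2 | hc2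
      · rw [if_pos hc2, max_eq_right (by linarith), min_eq_right (by linarith)]
      · rw [if_neg (not_lt.2 hc2), max_eq_left (by linarith), min_eq_right (by norm_num), mul_zero]
  have hucont : ∀ r : ℝ, Continuous (ur r) := by
    intro r
    have hfe : ur r = fun x => s₁ * min 1 (max 0 (r + 1 - nrm x)) := funext (hform r)
    rw [hfe]
    exact continuous_const.mul (continuous_const.min
      (continuous_const.max (continuous_const.sub nrm_continuous)))
  have hrange : ∀ r : ℝ, ∀ x : R3, ur r x ∈ Set.Icc (0:ℝ) s₁ := by
    intro r x
    rw [hform]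
    have h1 : 0 ≤ min 1 (max 0 (r + 1 - nrm x)) := le_min (by norm_num) (le_max_left 0 _)
    have h2 : min 1 (max 0 (r + 1 - nrm x)) ≤ 1 := min_le_left _ _
    constructor
    · positivity
    · nlinarith
  -- Lipschitz
  have hlip : ∀ r : ℝ, LipschitzWith (3 * s₁.toNNReal) (ur r) := by
    intro r
    apply LipschitzWith.of_dist_le_mul
    intro x y
    have hcoe : ((3 * s₁.toNNReal : NNReal) : ℝ) = 3 * s₁ := by
      push_cast [Real.coe_toNNReal s₁ hs₁.le]
      ring
    rw [hform r x, hform r y, Real.dist_eq, hcoe]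
    set cx := min 1 (max 0 (r + 1 - nrm x)) with hcx
    set cy := min 1 (max 0 (r + 1 - nrm y)) with hcy
    have hclamp : |cx - cy| ≤ |nrm x - nrm y| := by
      calc |cx - cy| ≤ max |1-1| |max 0 (r+1-nrm x) - max 0 (r+1-nrm y)| :=
            abs_min_sub_min_le_max _ _ _ _
        _ = |max (r+1-nrm x) 0 - max (r+1-nrm y) 0| := by
            rw [max_comm (0:ℝ), max_comm (0:ℝ)]; simp
        _ ≤ |(r+1-nrm x) - (r+1-nrm y)| := abs_max_sub_max_le_abs _ _ _
        _ = |nrm y - nrm x| := by congr 1; ring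
        _ = |nrm x - nrm y| := abs_sub_comm _ _
    have h3 : |nrm x - nrm y| ≤ 3 * dist x y := nrm_lip x y
    calc |s₁ * cx - s₁ * cy| = s₁ * |cx - cy| := by
          rw [← mul_sub, abs_mul, abs_of_pos hs₁]
      _ ≤ s₁ * (3 * dist x y) := by
          apply mul_le_mul_of_nonneg_left (hclamp.trans h3) hs₁.le
      _ = 3 * s₁ * dist x y := by ring
  -- pd bounds
  have hpd_bound : ∀ r : ℝ, ∀ x : R3, ∀ i : Fin 3, |pd i (ur r) x| ≤ 3 * s₁ := by
    intro r x i
    have hcoe : ((3 * s₁.toNNReal : NNReal) : ℝ) = 3 * s₁ := by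
      push_cast [Real.coe_toNNReal s₁ hs₁.le]
      ring
    have h1 : ‖fderiv ℝ (ur r) x‖ ≤ ((3 * s₁.toNNReal : NNReal) : ℝ) :=
      norm_fderiv_le_of_lipschitz ℝ (hlip r)
    have h2 : |pd i (ur r) x| ≤ ‖fderiv ℝ (ur r) x‖ * ‖(Pi.single i 1 : R3)‖ := by
      rw [← Real.norm_eq_abs]
      exact (fderiv ℝ (ur r) x).le_opNorm _
    have h3 : ‖(Pi.single i 1 : R3)‖ = 1 := by rw [Pi.norm_single]; norm_num
    rw [h3, mul_one] at h2
    rw [hcoe] at h1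
    linarith
  have hpd_in : ∀ r : ℝ, ∀ x : R3, nrm x < r → ∀ i, pd i (ur r) x = 0 := by
    intro r x hx i
    have hopen : IsOpen {y : R3 | nrm y < r} := isOpen_lt nrm_continuous continuous_const
    have hev : ur r =ᶠ[nhds x] fun _ => s₁ := by
      filter_upwards [hopen.mem_nhds hx] with y hy
      rw [hur', if_pos (le_of_lt hy)]
    unfold pd
    rw [hev.fderiv_eq, fderiv_fun_const]
    simp
  have hpd_out : ∀ r : ℝ, ∀ x : R3, r + 1 < nrm x → ∀ i, pd i (ur r) x = 0 := by
    intro r x hx i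
    have hopen : IsOpen {y : R3 | r + 1 < nrm y} := isOpen_lt continuous_const nrm_continuous
    have hev : ur r =ᶠ[nhds x] fun _ => (0:ℝ) := by
      filter_upwards [hopen.mem_nhds hx] with y hy
      have hy' : r + 1 < nrm y := hy
      rw [hur', if_neg (not_le.2 (by linarith)), if_neg (not_lt.2 (le_of_lt hy'))]
    unfold pd
    rw [hev.fderiv_eq, fderiv_fun_const]
    simp
  -- constant
  set C₁ : ℝ := 28 * π / 3 * (27 * s₁^2 / 2 + M) + 1 with hC₁
  have hC₁pos : 0 < C₁ := by
    have h1 : (0:ℝ) ≤ 28 * π / 3 * (27 * s₁^2 / 2 + M) :=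
      mul_nonneg (by positivity) (by nlinarith [sq_nonneg s₁])
    rw [hC₁]
    linarith
  -- main estimate
  have key : ∀ r : ℝ, 1 ≤ r → F (ur r) ≤ C₁ * r ^ 2 - (2 / 3) * π * r ^ 3 * h ^ 2 := by
    intro r hr
    have hr0 : (0:ℝ) ≤ r := by linarith
    set A : Set R3 := {x | r ≤ nrm x ∧ nrm x ≤ r + 1} with hA
    set B : Set R3 := {x | nrm x ≤ r} with hB
    set B' : Set R3 := {x | nrm x ≤ r + 1} with hB'
    have hAmeas : MeasurableSet A := by
      have : A = {x : R3 | r ≤ nrm x} ∩ {x : R3 | nrm x ≤ r + 1} := rfl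
      rw [this]
      exact (measurableSet_le measurable_const nrm_continuous.measurable).inter
        (measurableSet_le nrm_continuous.measurable measurable_const)
    have hBmeas : MeasurableSet B := measurableSet_le nrm_continuous.measurable measurable_const
    have hB'meas : MeasurableSet B' := measurableSet_le nrm_continuous.measurable measurable_const
    have hvolB : volume B = ENNReal.ofReal ((4/3) * π * r^3) := vol_closed r hr0
    have hvolB' : volume B' = ENNReal.ofReal ((4/3) * π * (r+1)^3) := vol_closed _ (by linarith)
    have hvolU : volume {x : R3 | nrm x < r} = ENNReal.ofReal ((4/3) * π * r^3) := vol_open r hr0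
    have hAdiff : A = B' \ {x : R3 | nrm x < r} := by
      ext x
      simp only [hA, hB', Set.mem_setOf_eq, Set.mem_diff, not_lt]
      tauto
    have hUsub : {x : R3 | nrm x < r} ⊆ B' := fun x hx => by
      simp only [hB', Set.mem_setOf_eq]
      have : nrm x < r := hx
      linarith
    have hvolA : volume A = ENNReal.ofReal ((4/3) * π * ((r+1)^3 - r^3)) := by
      rw [hAdiff, measure_diff hUsub
        ((measurableSet_lt nrm_continuous.measurable measurable_const).nullMeasurableSet)
        (by rw [hvolU]; exact ENNReal.ofReal_ne_top), hvolB', hvolU,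
        ← ENNReal.ofReal_sub _ (by positivity)]
      congr 1; ring
    have hvolA_toReal : (volume A).toReal = (4/3) * π * ((r+1)^3 - r^3) := by
      have hcube : (0:ℝ) ≤ (r+1)^3 - r^3 := by nlinarith [sq_nonneg r]
      rw [hvolA, ENNReal.toReal_ofReal (mul_nonneg (by positivity) hcube)]
    have hvolB_toReal : (volume B).toReal = (4/3) * π * r^3 := by
      rw [hvolB, ENNReal.toReal_ofReal (by positivity)]
    have hAbound : (volume A).toReal ≤ 28 * π / 3 * r^2 := by
      rw [hvolA_toReal]
      have h7 : (r+1)^3 - r^3 ≤ 7 * r^2 := by nlinarith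
      calc 4/3 * π * ((r+1)^3 - r^3) ≤ 4/3 * π * (7 * r^2) :=
            mul_le_mul_of_nonneg_left h7 (by positivity)
        _ = 28 * π / 3 * r^2 := by ring
    have hAnn : 0 ≤ (volume A).toReal := ENNReal.toReal_nonneg
    have hindA_int : ∀ c : ℝ, Integrable (A.indicator fun _ => c) := by
      intro c
      rw [integrable_indicator_iff hAmeas]
      exact integrableOn_const (by rw [hvolA]; exact ENNReal.ofReal_ne_top)
    have hindB_int : ∀ c : ℝ, Integrable (B.indicator fun _ => c) := by
      intro c
      rw [integrable_indicator_iff hBmeas]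
      exact integrableOn_const (by rw [hvolB]; exact ENNReal.ofReal_ne_top)
    have hindB'_int : ∀ c : ℝ, Integrable (B'.indicator fun _ => c) := by
      intro c
      rw [integrable_indicator_iff hB'meas]
      exact integrableOn_const (by rw [hvolB']; exact ENNReal.ofReal_ne_top)
    -- gradient term
    have hgrad_ptw : ∀ x : R3, (∑ i, (pd i (ur r) x)^2) ≤ A.indicator (fun _ => 27 * s₁^2) x := by
      intro x
      by_cases hx : x ∈ A
      · rw [Set.indicator_of_mem hx]
        have h0 := hpd_bound r x 0
        have h1 := hpd_bound r x 1
        have h2 := hpd_bound r x 2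
        rw [Fin.sum_univ_three]
        nlinarith [abs_nonneg (pd 0 (ur r) x), abs_nonneg (pd 1 (ur r) x),
          abs_nonneg (pd 2 (ur r) x), sq_abs (pd 0 (ur r) x), sq_abs (pd 1 (ur r) x),
          sq_abs (pd 2 (ur r) x)]
      · rw [Set.indicator_of_notMem hx]
        simp only [hA, Set.mem_setOf_eq, not_and_or, not_le] at hx
        have hz : ∀ i, pd i (ur r) x = 0 := by
          rcases hx with hlt | hgt
          · exact hpd_in r x hlt
          · exact hpd_out r x hgt
        simp [hz]
    have hI1 : (∫ x : R3, ∑ i, (pd i (ur r) x)^2) ≤ 27 * s₁^2 * (volume A).toReal := by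
      have hmono := integral_mono_of_nonneg
        (f := fun x : R3 => ∑ i, (pd i (ur r) x)^2)
        (g := A.indicator fun _ => 27 * s₁^2)
        (Eventually.of_forall fun x => by positivity)
        (hindA_int _)
        (Eventually.of_forall hgrad_ptw)
      rwa [integral_indicator_const _ hAmeas, smul_eq_mul, mul_comm] at hmono
    -- potential term
    have hpot_ptw : ∀ x : R3, V (ur r x) ≤
        B.indicator (fun _ => -(h^2)/2) x + A.indicator (fun _ => M) x := by
      intro x
      rcases le_or_gt (nrm x) r with hc | hc
      · have hu : ur r x = s₁ := by rw [hur', if_pos hc]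
        have hxB : x ∈ B := hc
        rw [hu, hVs₁, Set.indicator_of_mem hxB]
        have hind : 0 ≤ A.indicator (fun _ => M) x :=
          Set.indicator_apply_nonneg (fun _ => hM0)
        linarith
      · have hxB : x ∉ B := by
          simp only [hB, Set.mem_setOf_eq]; exact not_le.2 hc
        rw [Set.indicator_of_notMem hxB, zero_add]
        rcases le_or_gt (nrm x) (r+1) with hc2 | hc2
        · have hxA : x ∈ A := ⟨hc.le, hc2⟩
          rw [Set.indicator_of_mem hxA]
          have hb := hM _ (hrange r x)
          rw [Real.norm_eq_abs] at hb
          linarith [le_abs_self (V (ur r x))]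
        · have hu : ur r x = 0 := by
            rw [hur', if_neg (not_le.2 hc), if_neg (not_lt.2 hc2.le)]
          have hxA : x ∉ A := fun hmem => absurd hmem.2 (not_le.2 hc2)
          rw [hu, hV0, Set.indicator_of_notMem hxA]
    have hpot_abs : ∀ x : R3, ‖V (ur r x)‖ ≤ B'.indicator (fun _ => M) x := by
      intro x
      rcases le_or_gt (nrm x) (r+1) with hc | hc
      · have hxB' : x ∈ B' := hc
        rw [Set.indicator_of_mem hxB']
        exact hM _ (hrange r x)
      · have hu : ur r x = 0 := by
          rw [hur', if_neg (not_le.2 (by linarith)), if_neg (not_lt.2 hc.le)]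
        have hxB' : x ∉ B' := by
          simp only [hB', Set.mem_setOf_eq]; exact not_le.2 hc
        rw [Set.indicator_of_notMem hxB', hu, hV0]
        simp
    have hVint : Integrable (fun x : R3 => V (ur r x)) := by
      apply Integrable.mono' (hindB'_int M) ((hVc.comp (hucont r)).aestronglyMeasurable)
      exact Eventually.of_forall hpot_abs
    have hI2 : (∫ x : R3, V (ur r x)) ≤
        (4/3) * π * r^3 * (-(h^2)/2) + (volume A).toReal * M := by
      have hsum_int : Integrable (fun x : R3 =>
          B.indicator (fun _ => -(h^2)/2) x + A.indicator (fun _ => M) x) :=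
        (hindB_int _).add (hindA_int _)
      have hmono := integral_mono hVint hsum_int hpot_ptw
      rwa [integral_add (hindB_int _) (hindA_int _), integral_indicator_const _ hBmeas,
        integral_indicator_const _ hAmeas, smul_eq_mul, smul_eq_mul, measureReal_def, measureReal_def, hvolB_toReal] at hmono
    -- combine
    have hFr : F (ur r) = (1/2) * (∫ x : R3, ∑ i, (pd i (ur r) x)^2)
        + ∫ x : R3, V (ur r x) := by
      rw [hF]
    rw [hFr]
    have hstep : (1/2) * (∫ x : R3, ∑ i, (pd i (ur r) x)^2) + ∫ x : R3, V (ur r x)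
        ≤ (1/2) * (27 * s₁^2 * (volume A).toReal)
          + ((4/3) * π * r^3 * (-(h^2)/2) + (volume A).toReal * M) := by
      linarith
    have hfinal : (1/2) * (27 * s₁^2 * (volume A).toReal)
          + ((4/3) * π * r^3 * (-(h^2)/2) + (volume A).toReal * M)
        ≤ C₁ * r ^ 2 - (2 / 3) * π * r ^ 3 * h ^ 2 := by
      rw [hC₁]
      have hmul : (27 * s₁^2 / 2 + M) * (volume A).toReal
          ≤ (27 * s₁^2 / 2 + M) * (28 * π / 3 * r^2) := by
        apply mul_le_mul_of_nonneg_left hAbound (by positivity)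
      nlinarith [sq_nonneg r]
    linarith
  refine ⟨⟨C₁, hC₁pos, key⟩, ?_⟩
  -- tendsto
  have hc2 : (0:ℝ) < (2/3) * π * h^2 := by positivity
  have hbase : Tendsto (fun r : ℝ => C₁ * r ^ 2 - (2 / 3) * π * r ^ 3 * h ^ 2) atTop atBot := by
    have heq : (fun r : ℝ => C₁ * r ^ 2 - (2 / 3) * π * r ^ 3 * h ^ 2)
        = fun r : ℝ => C₁ * r ^ 2 - ((2/3) * π * h^2) * r ^ 3 := by
      funext r; ring
    rw [heq]
    exact tendsto_aux _ _ hc2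
  apply tendsto_atBot_mono' atTop ?_ hbase
  filter_upwards [eventually_ge_atTop (1:ℝ)] with r hr
  exact key r hr
end

section
/- Let ω, β ∈ ℝ, let W : ℝ → ℝ be continuous with W(0) = 0, and let u : ℝ³ → ℝ be continuously differentiable with compact support. Define J[v] = ½∫_{ℝ³}|∇v|²dx + ∫_{ℝ³}(W(v) − ½ω²v²)dx + β²ω² K(v) and u_λ(x) = u(x/λ) for λ > 0. If the function λ ↦ J[u_λ] has derivative 0 at λ = 1, then the Pohozaev–Derrick identity holds: ∫_{ℝ³} W(u) dx = ½ω²∫_{ℝ³}u²dx − (1/6)∫_{ℝ³}|∇u|²dx − (5/3)ω²β² K(u). -/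
open MeasureTheory Real

/-- The Coulomb energy `K(u) = ∬ u(x)u(y)/(4π|x−y|) dx dy` associated with the Green
function `G(x) = 1/(4π|x|)` of `−Δ` on `ℝ³` (Euclidean distance). -/
noncomputable def coulomb (u : R3 → ℝ) : ℝ :=
  ∫ x : R3, ∫ y : R3, u x * u y / (4 * π * Real.sqrt (∑ i, (x i - y i) ^ 2))

lemma finrank_R3 : Module.finrank ℝ R3 = 3 := by simp

lemma scale_int (f : R3 → ℝ) {lam : ℝ} (h : 0 ≤ lam) :
    (∫ x : R3, f (lam⁻¹ • x)) = lam ^ 3 * ∫ x : R3, f x := by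
  rw [MeasureTheory.Measure.integral_comp_inv_smul_of_nonneg volume f h, finrank_R3,
    smul_eq_mul]

lemma pd_scale (u : R3 → ℝ) (hu : ContDiff ℝ 1 u) (c : ℝ) (i : Fin 3) (x : R3) :
    pd i (fun y => u (c • y)) x = c * pd i u (c • x) := by
  have hdu : DifferentiableAt ℝ u (c • x) := (hu.differentiable one_ne_zero) _
  have hL : HasFDerivAt (fun y : R3 => c • y) (c • ContinuousLinearMap.id ℝ R3) x := by
    simpa using ((ContinuousLinearMap.id ℝ R3).hasFDerivAt.const_smul c)
  have h2 : HasFDerivAt (fun y : R3 => u (c • y))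
      ((fderiv ℝ u (c • x)).comp (c • ContinuousLinearMap.id ℝ R3)) x :=
    hdu.hasFDerivAt.comp x hL
  rw [pd, h2.fderiv]
  simp [pd, ContinuousLinearMap.comp_apply, _root_.map_smul, smul_eq_mul]

lemma div_four_pi_mul (a s lam : ℝ) :
    a / (4 * π * (lam * s)) = lam⁻¹ * (a / (4 * π * s)) := by
  rw [show 4 * π * (lam * s) = lam * (4 * π * s) by ring, div_mul_eq_div_div_swap,
    div_eq_inv_mul]

lemma coulomb_scale (u : R3 → ℝ) {lam : ℝ} (h : 0 < lam) :
    coulomb (fun x => u (lam⁻¹ • x)) = lam ^ 5 * coulomb u := by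
  have hsqrt : ∀ x z : R3, Real.sqrt (∑ i, (x i - lam * z i) ^ 2)
      = lam * Real.sqrt (∑ i, ((lam⁻¹ • x) i - z i) ^ 2) := by
    intro x z
    have : (∑ i, (x i - lam * z i) ^ 2) = lam ^ 2 * ∑ i, ((lam⁻¹ • x) i - z i) ^ 2 := by
      rw [Finset.mul_sum]
      refine Finset.sum_congr rfl fun i _ => ?_
      have : (lam⁻¹ • x) i = lam⁻¹ * x i := rfl
      rw [this]
      field_simp
    rw [this, Real.sqrt_mul (sq_nonneg lam), Real.sqrt_sq h.le]
  have hinner : ∀ x : R3,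
      (∫ y : R3, u (lam⁻¹ • x) * u (lam⁻¹ • y) / (4 * π * Real.sqrt (∑ i, (x i - y i) ^ 2)))
      = lam ^ 2 * ∫ z : R3,
          u (lam⁻¹ • x) * u z / (4 * π * Real.sqrt (∑ i, ((lam⁻¹ • x) i - z i) ^ 2)) := by
    intro x
    have h1 : (∫ y : R3, u (lam⁻¹ • x) * u (lam⁻¹ • y)
          / (4 * π * Real.sqrt (∑ i, (x i - y i) ^ 2)))
        = ∫ y : R3, (fun z : R3 => u (lam⁻¹ • x) * u z
            / (4 * π * Real.sqrt (∑ i, (x i - lam * z i) ^ 2))) (lam⁻¹ • y) := by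
      refine integral_congr_ae (Filter.Eventually.of_forall fun y => ?_)
      have : ∀ i : Fin 3, x i - lam * ((lam⁻¹ • y) i) = x i - y i := by
        intro i
        have : (lam⁻¹ • y) i = lam⁻¹ * y i := rfl
        rw [this]
        field_simp
      simp only [this]
    have h1' := scale_int (fun z : R3 => u (lam⁻¹ • x) * u z
        / (4 * π * Real.sqrt (∑ i, (x i - lam * z i) ^ 2))) h.le
    have h2 : (∫ z : R3, u (lam⁻¹ • x) * u z
          / (4 * π * Real.sqrt (∑ i, (x i - lam * z i) ^ 2)))
        = lam⁻¹ * ∫ z : R3, u (lam⁻¹ • x) * u z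
            / (4 * π * Real.sqrt (∑ i, ((lam⁻¹ • x) i - z i) ^ 2)) := by
      rw [← integral_const_mul]
      refine integral_congr_ae (Filter.Eventually.of_forall fun z => ?_)
      beta_reduce
      rw [hsqrt x z, div_four_pi_mul]
    rw [h1, h1', h2, ← mul_assoc]
    congr 1
    field_simp
  calc coulomb (fun x => u (lam⁻¹ • x))
      = ∫ x : R3, lam ^ 2 * (fun w : R3 => ∫ z : R3,
          u w * u z / (4 * π * Real.sqrt (∑ i, (w i - z i) ^ 2))) (lam⁻¹ • x) := by
        refine integral_congr_ae (Filter.Eventually.of_forall fun x => ?_)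
        exact hinner x
    _ = lam ^ 2 * ∫ x : R3, (fun w : R3 => ∫ z : R3,
          u w * u z / (4 * π * Real.sqrt (∑ i, (w i - z i) ^ 2))) (lam⁻¹ • x) :=
        integral_const_mul _ _
    _ = lam ^ 2 * (lam ^ 3 * coulomb u) :=
        congrArg (fun t => lam ^ 2 * t) (scale_int (fun w : R3 => ∫ z : R3,
          u w * u z / (4 * π * Real.sqrt (∑ i, (w i - z i) ^ 2))) h.le)
    _ = lam ^ 5 * coulomb u := by ring

/-- if the dilation derivative `(d/dλ)J[u_λ]|_{λ=1}` vanishes, where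
`J[v] = ½∫|∇v|² + ∫(W(v) − ½ω²v²) + β²ω²K(v)` and `u_λ(x) = u(x/λ)`, then the
Pohozaev–Derrick identity holds:
`∫W(u) = ½ω²∫u² − (1/6)∫|∇u|² − (5/3)ω²β²K(u)`. -/
theorem pohozaev_derrick_identity
    (ω β : ℝ) (W : ℝ → ℝ) (hWc : Continuous W) (hW0 : W 0 = 0)
    (u : R3 → ℝ) (hu : ContDiff ℝ 1 u) (hsupp : HasCompactSupport u)
    (J : (R3 → ℝ) → ℝ)
    (hJ : ∀ v : R3 → ℝ, J v =
      (1 / 2) * (∫ x : R3, ∑ i, (pd i v x) ^ 2)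
        + (∫ x : R3, (W (v x) - (1 / 2) * ω ^ 2 * (v x) ^ 2))
        + β ^ 2 * ω ^ 2 * coulomb v)
    (hcrit : HasDerivAt (fun lam : ℝ => J (fun x => u (lam⁻¹ • x))) 0 1) :
    (∫ x : R3, W (u x)) =
      (1 / 2) * ω ^ 2 * (∫ x : R3, (u x) ^ 2)
        - (1 / 6) * (∫ x : R3, ∑ i, (pd i u x) ^ 2)
        - (5 / 3) * ω ^ 2 * β ^ 2 * coulomb u := by
  set A : ℝ := ∫ x : R3, ∑ i, (pd i u x) ^ 2 with hA
  set B : ℝ := ∫ x : R3, (W (u x) - (1 / 2) * ω ^ 2 * (u x) ^ 2) with hB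
  set C : ℝ := β ^ 2 * ω ^ 2 * coulomb u with hC
  have key : ∀ lam : ℝ, 0 < lam →
      J (fun x => u (lam⁻¹ • x)) = lam * ((1 / 2) * A) + lam ^ 3 * B + lam ^ 5 * C := by
    intro lam hlam
    rw [hJ]
    have t1 : (∫ x : R3, ∑ i, (pd i (fun y => u (lam⁻¹ • y)) x) ^ 2) = lam * A := by
      have e : ∀ x : R3, (∑ i, (pd i (fun y => u (lam⁻¹ • y)) x) ^ 2)
          = (lam⁻¹) ^ 2 * (fun w : R3 => ∑ i, (pd i u w) ^ 2) (lam⁻¹ • x) := by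
        intro x
        simp only [Finset.mul_sum]
        refine Finset.sum_congr rfl fun i _ => ?_
        rw [pd_scale u hu lam⁻¹ i x, mul_pow]
      calc (∫ x : R3, ∑ i, (pd i (fun y => u (lam⁻¹ • y)) x) ^ 2)
          = ∫ x : R3, (lam⁻¹) ^ 2 * (fun w : R3 => ∑ i, (pd i u w) ^ 2) (lam⁻¹ • x) :=
            integral_congr_ae (Filter.Eventually.of_forall e)
        _ = (lam⁻¹) ^ 2 * ∫ x : R3, (fun w : R3 => ∑ i, (pd i u w) ^ 2) (lam⁻¹ • x) :=
            integral_const_mul _ _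
        _ = (lam⁻¹) ^ 2 * (lam ^ 3 * A) :=
            congrArg (fun t => (lam⁻¹) ^ 2 * t)
              (scale_int (fun w : R3 => ∑ i, (pd i u w) ^ 2) hlam.le)
        _ = lam * A := by field_simp
    have t2 : (∫ x : R3, (W (u (lam⁻¹ • x)) - (1 / 2) * ω ^ 2 * (u (lam⁻¹ • x)) ^ 2))
        = lam ^ 3 * B := by
      exact scale_int (fun x => W (u x) - (1 / 2) * ω ^ 2 * (u x) ^ 2) hlam.le
    have t3 : coulomb (fun x => u (lam⁻¹ • x)) = lam ^ 5 * coulomb u :=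
      coulomb_scale u hlam
    rw [t1, t2, t3, hC]
    ring
  have hev : (fun lam : ℝ => lam * ((1 / 2) * A) + lam ^ 3 * B + lam ^ 5 * C)
      =ᶠ[nhds 1] (fun lam : ℝ => J (fun x => u (lam⁻¹ • x))) := by
    filter_upwards [Ioi_mem_nhds (by norm_num : (0:ℝ) < 1)] with lam hlam
    exact (key lam hlam).symm
  have hP : HasDerivAt (fun lam : ℝ => lam * ((1 / 2) * A) + lam ^ 3 * B + lam ^ 5 * C)
      ((1 / 2) * A + 3 * B + 5 * C) 1 := by
    have h1 : HasDerivAt (fun l : ℝ => l * ((1 / 2) * A)) ((1 / 2) * A) 1 := by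
      simpa using (hasDerivAt_id (1:ℝ)).mul_const ((1 / 2) * A)
    have h2 : HasDerivAt (fun l : ℝ => l ^ 3 * B) (3 * B) 1 := by
      simpa using (hasDerivAt_pow 3 (1:ℝ)).mul_const B
    have h3 : HasDerivAt (fun l : ℝ => l ^ 5 * C) (5 * C) 1 := by
      simpa using (hasDerivAt_pow 5 (1:ℝ)).mul_const C
    exact (h1.add h2).add h3
  have hP0 : HasDerivAt (fun lam : ℝ => lam * ((1 / 2) * A) + lam ^ 3 * B + lam ^ 5 * C) 0 1 :=
    hcrit.congr_of_eventuallyEq hev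
  have heq : (1 / 2) * A + 3 * B + 5 * C = 0 := hP.unique hP0
  have hiW : Integrable (fun x : R3 => W (u x)) := by
    exact (hWc.comp hu.continuous).integrable_of_hasCompactSupport (hsupp.comp_left hW0)
  have hiu2 : Integrable (fun x : R3 => (1 / 2) * ω ^ 2 * (u x) ^ 2) := by
    have hc : Continuous (fun x : R3 => (1 / 2) * ω ^ 2 * (u x) ^ 2) := continuous_const.mul (hu.continuous.pow 2)
    have hs : HasCompactSupport (fun x : R3 => (1 / 2) * ω ^ 2 * (u x) ^ 2) := by
      have : (fun x : R3 => (1 / 2) * ω ^ 2 * (u x) ^ 2)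
          = (fun t : ℝ => (1 / 2) * ω ^ 2 * t ^ 2) ∘ u := rfl
      rw [this]
      exact hsupp.comp_left (by norm_num)
    exact hc.integrable_of_hasCompactSupport hs
  have hsplit : B = (∫ x : R3, W (u x)) - (1 / 2) * ω ^ 2 * (∫ x : R3, (u x) ^ 2) := by
    rw [hB, integral_sub hiW hiu2, integral_const_mul]
  have hcomm : ω ^ 2 * β ^ 2 * coulomb u = β ^ 2 * ω ^ 2 * coulomb u := by ring
  rw [hC] at heq
  linarith [heq, hsplit, hcomm]
end

section
/- Let u₀ : ℝ³ → ℝ be Lebesgue integrable, let ω₀, β ∈ ℝ, v ∈ (−1,1), set γ = 1/√(1−v²), and define the boosted soliton fields u_v(t,x) = u₀(γ(x₁−vt), x₂, x₃) and S_v(t,x) = ω₀γ(v x₁ − t). Then for every t ∈ ℝ the electric charge of the moving soliton, q[σ_v] = −β ∫_{ℝ³} ∂ₜS_v(t,x) · u_v(t,x) dx, equals βω₀ ∫_{ℝ³} u₀(x) dx; in particular it is independent of v and t, i.e. the electric charge of a moving soliton is independent of the motion. -/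
open MeasureTheory Real

lemma change_var (u₀ : R3 → ℝ) (hint : Integrable u₀) (γ c : ℝ) (hγ : 0 < γ) :
    (∫ x : R3, u₀ (Function.update x 0 (γ * x 0 + c))) = γ⁻¹ * ∫ x : R3, u₀ x := by
  set M : Matrix (Fin 3) (Fin 3) ℝ := Matrix.diagonal (fun i => if i = 0 then γ else 1) with hM
  set A : R3 →ₗ[ℝ] R3 := Matrix.toLin' M with hA
  have hdet : LinearMap.det A = γ := by
    rw [hA, LinearMap.det_toLin', hM, Matrix.det_diagonal, Fin.prod_univ_three]
    norm_num [Fin.ext_iff]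
  set cc : R3 := fun i => if i = 0 then c else 0 with hcc
  have hφ : ∀ x : R3, Function.update x 0 (γ * x 0 + c) = A x + cc := by
    intro x
    funext i
    rw [hA, Matrix.toLin'_apply, hM]
    simp only [Pi.add_apply, Matrix.mulVec_diagonal, Function.update, hcc]
    split <;> simp_all
  have hAmeas : Measurable A := A.continuous_of_finiteDimensional.measurable
  have hmapA : Measure.map (⇑A) (volume : Measure R3)
      = ENNReal.ofReal |γ|⁻¹ • volume := by
    rw [Measure.map_linearMap_addHaar_eq_smul_addHaar volume (by rw [hdet]; exact hγ.ne'), hdet, abs_inv]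
  have hmap : Measure.map (fun x : R3 => A x + cc) volume
      = ENNReal.ofReal γ⁻¹ • volume := by
    have : (fun x : R3 => A x + cc) = (fun y => y + cc) ∘ ⇑A := rfl
    rw [this, ← Measure.map_map (measurable_add_const cc) hAmeas, hmapA,
      Measure.map_smul, map_add_right_eq_self, abs_of_pos hγ]
  have hsm : AEStronglyMeasurable u₀ (Measure.map (fun x : R3 => A x + cc) volume) := by
    rw [hmap]
    exact hint.1.mono_ac Measure.smul_absolutelyContinuous
  have := MeasureTheory.integral_map (f := u₀)
    (φ := fun x : R3 => A x + cc) (μ := volume)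
    ((hAmeas.add_const cc).aemeasurable) hsm
  rw [hmap, integral_smul_measure, ENNReal.toReal_ofReal (by positivity)] at this
  simp only [smul_eq_mul] at this
  calc (∫ x : R3, u₀ (Function.update x 0 (γ * x 0 + c)))
      = ∫ x : R3, u₀ (A x + cc) := by simp_rw [hφ]
    _ = γ⁻¹ * ∫ x : R3, u₀ x := this.symm


/-- the electric charge `q[σ_v] = −β ∫ ∂ₜS_v(t,x) u_v(t,x) dx` of the boosted
soliton `u_v(t,x) = u₀(γ(x₁−vt), x₂, x₃)`, `S_v(t,x) = ω₀γ(vx₁ − t)` equals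
`βω₀∫u₀ dx` for every time `t`; in particular it is independent of the motion. -/
theorem charge_of_moving_soliton
    (u₀ : R3 → ℝ) (hint : Integrable u₀)
    (ω₀ β v : ℝ) (hv : v ∈ Set.Ioo (-1 : ℝ) 1)
    (γ : ℝ) (hγ : γ = 1 / Real.sqrt (1 - v ^ 2))
    (uv Sv : ℝ → R3 → ℝ)
    (huv : ∀ t : ℝ, ∀ x : R3, uv t x = u₀ (Function.update x 0 (γ * (x 0 - v * t))))
    (hSv : ∀ t : ℝ, ∀ x : R3, Sv t x = ω₀ * γ * (v * x 0 - t)) :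
    ∀ t : ℝ,
      -β * (∫ x : R3, deriv (fun s => Sv s x) t * uv t x) = β * ω₀ * ∫ x : R3, u₀ x := by
  intro t
  have h1 : 0 < 1 - v ^ 2 := by nlinarith [hv.1, hv.2]
  have hγpos : 0 < γ := by
    rw [hγ]
    positivity
  have hd : ∀ x : R3, deriv (fun s => Sv s x) t = -(ω₀ * γ) := by
    intro x
    have he : (fun s => Sv s x) = fun s => ω₀ * γ * (v * x 0 - s) :=
      funext fun s => hSv s x
    rw [he]
    have h := ((hasDerivAt_id t).const_sub (v * x 0)).const_mul (ω₀ * γ)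
    simpa using h.deriv
  have hi : ∀ x : R3, deriv (fun s => Sv s x) t * uv t x
      = -(ω₀ * γ) * u₀ (Function.update x 0 (γ * x 0 + -(γ * v * t))) := by
    intro x
    rw [hd x, huv t x]
    congr 2
    ring
  calc -β * (∫ x : R3, deriv (fun s => Sv s x) t * uv t x)
      = -β * (∫ x : R3, -(ω₀ * γ) * u₀ (Function.update x 0 (γ * x 0 + -(γ * v * t)))) := by
        simp_rw [hi]
    _ = -β * (-(ω₀ * γ) * (γ⁻¹ * ∫ x : R3, u₀ x)) := by
        rw [integral_const_mul, change_var u₀ hint γ _ hγpos]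
    _ = β * ω₀ * ∫ x : R3, u₀ x := by
        field_simp
end

section
/- Let u₀ : ℝ³ → ℝ be continuously differentiable with compact support and radially symmetric, let ω₀ ∈ ℝ, v ∈ (−1,1) with v ≠ 0, set γ = 1/√(1−v²), and define the boosted soliton fields u_v(t,x) = u₀(γ(x₁−vt), x₂, x₃) and S_v(t,x) = ω₀γ(v x₁ − t). Then for every t ∈ ℝ the matter-field momentum integral P = ∫_{ℝ³}(∂ₜu_v ∇u_v + ∂ₜS_v ∇S_v · u_v²) dx is parallel to the direction of motion e₁ = (1,0,0), its second and third components vanish, and its magnitude satisfies |P| = γ |v| m, where m = (1/3)∫_{ℝ³}|∇u₀|²dx + ω₀²∫_{ℝ³}u₀²dx. Consequently the mass of the moving soliton, defined as |P|/|v|, equals γ m. -/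
open MeasureTheory Real

/-- diagonal linear map -/
noncomputable def diagL (g : Fin 3 → ℝ) : R3 →ₗ[ℝ] R3 where
  toFun x := fun i => g i * x i
  map_add' x y := by funext i; simp [mul_add]
  map_smul' c x := by funext i; simp [smul_eq_mul]; ring

noncomputable def diagCLM (g : Fin 3 → ℝ) : R3 →L[ℝ] R3 :=
  LinearMap.toContinuousLinearMap (diagL g)

@[simp] lemma diagL_apply (g : Fin 3 → ℝ) (x : R3) (i : Fin 3) : diagL g x i = g i * x i := rfl
@[simp] lemma diagCLM_apply (g : Fin 3 → ℝ) (x : R3) (i : Fin 3) : diagCLM g x i = g i * x i := rfl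

lemma diagL_single (g : Fin 3 → ℝ) (i : Fin 3) : diagL g (Pi.single i 1) = Pi.single i (g i) := by
  funext j
  by_cases h : j = i <;> simp [h, Pi.single_apply]

lemma det_diagL (g : Fin 3 → ℝ) : LinearMap.det (diagL g) = g 0 * g 1 * g 2 := by
  have : LinearMap.toMatrix' (diagL g) = Matrix.diagonal g := by
    ext i j
    rw [LinearMap.toMatrix'_apply]
    by_cases h : i = j <;> simp [diagL, h, Matrix.diagonal, eq_comm]
  rw [← LinearMap.det_toMatrix', this, Matrix.det_diagonal, Fin.prod_univ_three]

/-- permutation linear map -/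
noncomputable def permL (σ : Equiv.Perm (Fin 3)) : R3 →ₗ[ℝ] R3 where
  toFun x := x ∘ σ
  map_add' x y := rfl
  map_smul' c x := rfl

@[simp] lemma permL_apply (σ : Equiv.Perm (Fin 3)) (x : R3) (i : Fin 3) : permL σ x i = x (σ i) := rfl

lemma permL_single (σ : Equiv.Perm (Fin 3)) (i : Fin 3) :
    permL σ (Pi.single i 1) = Pi.single (σ.symm i) 1 := by
  funext j
  simp [Pi.single_apply, Equiv.eq_symm_apply, eq_comm]

lemma det_permL_swap (i : Fin 3) (h : i ≠ 0) : |LinearMap.det (permL (Equiv.swap 0 i))| = 1 := by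
  have : LinearMap.toMatrix' (permL (Equiv.swap 0 i)) =
      (Equiv.swap (0:Fin 3) i).toPEquiv.toMatrix.transpose := by
    ext a b
    rw [LinearMap.toMatrix'_apply]
    have hiff : (Equiv.swap 0 i a = b) ↔ (Equiv.swap 0 i b = a) := by
      rw [Equiv.swap_apply_eq_iff, eq_comm]
    simp only [Matrix.transpose_apply, PEquiv.toMatrix_apply, Equiv.toPEquiv_apply,
      Option.mem_def, Option.some.injEq, permL, LinearMap.coe_mk, AddHom.coe_mk,
      Function.comp_apply, Pi.single_apply]
    rw [if_congr hiff.symm rfl rfl]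
  rw [← LinearMap.det_toMatrix', this, Matrix.det_transpose, Matrix.det_permutation]
  rw [Equiv.Perm.sign_swap (Ne.symm h)]
  simp

noncomputable def permCLM (σ : Equiv.Perm (Fin 3)) : R3 →L[ℝ] R3 :=
  LinearMap.toContinuousLinearMap (permL σ)

@[simp] lemma permCLM_coe (σ : Equiv.Perm (Fin 3)) : ⇑(permCLM σ) = ⇑(permL σ) := rfl
@[simp] lemma diagCLM_coe (g : Fin 3 → ℝ) : ⇑(diagCLM g) = ⇑(diagL g) := rfl

lemma diagCLM_single (g : Fin 3 → ℝ) (i : Fin 3) :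
    diagCLM g (Pi.single i 1) = Pi.single i (g i) := diagL_single g i

lemma permCLM_single (σ : Equiv.Perm (Fin 3)) (i : Fin 3) :
    permCLM σ (Pi.single i 1) = Pi.single (σ.symm i) 1 := permL_single σ i

/-- change of variables for a linear map with nonzero determinant -/
lemma integral_comp_linear (L : R3 →ₗ[ℝ] R3) (hdet : LinearMap.det L ≠ 0)
    (F : R3 → ℝ) (hF : Continuous F) :
    ∫ x : R3, F (L x) = |LinearMap.det L|⁻¹ * ∫ y : R3, F y := by
  have hLc : Continuous L := LinearMap.continuous_on_pi L
  have h1 : ∫ y : R3, F y ∂(Measure.map L volume) = ∫ x : R3, F (L x) := by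
    apply MeasureTheory.integral_map hLc.aemeasurable
    rw [Real.map_linearMap_volume_pi_eq_smul_volume_pi hdet]
    exact hF.aestronglyMeasurable
  rw [Real.map_linearMap_volume_pi_eq_smul_volume_pi hdet, integral_smul_measure] at h1
  rw [← h1, ENNReal.toReal_ofReal (abs_nonneg _), smul_eq_mul, abs_inv]

lemma fderiv_comp_linear (u : R3 → ℝ) (hu : Differentiable ℝ u) (T : R3 →L[ℝ] R3)
    (hT : ∀ x, u (T x) = u x) (x w : R3) :
    fderiv ℝ u x w = fderiv ℝ u (T x) (T w) := by
  have h1 : HasFDerivAt (fun z => u (T z)) ((fderiv ℝ u (T x)).comp T) x :=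
    (hu (T x)).hasFDerivAt.comp x T.hasFDerivAt
  have h2 : (fun z => u (T z)) = u := funext hT
  rw [h2] at h1
  rw [h1.fderiv]
  rfl

/-- the matter-field momentum
`P = ∫(∂ₜu_v ∇u_v + ∂ₜS_v ∇S_v u_v²) dx` of the boosted soliton is parallel to the
direction of motion `e₁` (its second and third components vanish), its first component is
`−γvm`, its magnitude is `γ|v|m` where `m = (1/3)∫|∇u₀|² + ω₀²∫u₀²`, and consequently the
mass `|P|/|v|` of the moving soliton equals `γm`. -/
theorem momentum_and_mass_of_moving_soliton
    (u₀ : R3 → ℝ) (hu : ContDiff ℝ 1 u₀) (hsupp : HasCompactSupport u₀)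
    (f : ℝ → ℝ) (hrad : ∀ x : R3, u₀ x = f (Real.sqrt (∑ i, (x i) ^ 2)))
    (ω₀ v : ℝ) (hv : v ∈ Set.Ioo (-1 : ℝ) 1) (hv0 : v ≠ 0)
    (γ : ℝ) (hγ : γ = 1 / Real.sqrt (1 - v ^ 2))
    (uv Sv : ℝ → R3 → ℝ)
    (huv : ∀ t : ℝ, ∀ x : R3, uv t x = u₀ (Function.update x 0 (γ * (x 0 - v * t))))
    (hSv : ∀ t : ℝ, ∀ x : R3, Sv t x = ω₀ * γ * (v * x 0 - t))
    (m : ℝ)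
    (hm : m = (1 / 3) * (∫ x : R3, ∑ i, (pd i u₀ x) ^ 2) + ω₀ ^ 2 * ∫ x : R3, (u₀ x) ^ 2)
    (P : ℝ → Fin 3 → ℝ)
    (hP : ∀ t : ℝ, ∀ i : Fin 3, P t i =
      ∫ x : R3, (deriv (fun s => uv s x) t * pd i (uv t) x
        + deriv (fun s => Sv s x) t * pd i (Sv t) x * (uv t x) ^ 2)) :
    ∀ t : ℝ,
      P t 1 = 0 ∧ P t 2 = 0 ∧ P t 0 = -(γ * v * m)
      ∧ Real.sqrt (∑ i, (P t i) ^ 2) = γ * |v| * m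
      ∧ Real.sqrt (∑ i, (P t i) ^ 2) / |v| = γ * m := by
  intro t
  classical
  -- positivity facts
  have hv2 : (0:ℝ) < 1 - v ^ 2 := by nlinarith [hv.1, hv.2]
  have hsq : 0 < Real.sqrt (1 - v ^ 2) := Real.sqrt_pos.mpr hv2
  have hγpos : 0 < γ := by rw [hγ]; exact one_div_pos.mpr hsq
  have hγ0 : γ ≠ 0 := ne_of_gt hγpos
  have hud : Differentiable ℝ u₀ := hu.differentiable one_ne_zero
  -- continuity and integrability
  have contpd : ∀ i : Fin 3, Continuous (pd i u₀) := fun i =>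
    (hu.continuous_fderiv one_ne_zero).clm_apply continuous_const
  have hcspd : ∀ i : Fin 3, HasCompactSupport (pd i u₀) := fun i =>
    (hsupp.fderiv ℝ).comp_left (g := fun φ : R3 →L[ℝ] ℝ => φ (Pi.single i 1)) rfl
  have intpd2 : ∀ i : Fin 3, Integrable (fun x : R3 => (pd i u₀ x) ^ 2) :=
    fun i => Continuous.integrable_of_hasCompactSupport (μ := volume) ((contpd i).pow 2)
      ((hcspd i).comp_left (g := fun a : ℝ => a ^ 2) (by simp))
  have intu2 : Integrable (fun x : R3 => (u₀ x) ^ 2) :=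
    Continuous.integrable_of_hasCompactSupport (μ := volume) (hu.continuous.pow 2)
      (hsupp.comp_left (g := fun a : ℝ => a ^ 2) (by simp))
  -- symmetry of u₀
  set gf : Fin 3 → Fin 3 → ℝ := fun j k => if k = j then -1 else 1 with hgf
  have hgfsq : ∀ j i : Fin 3, gf j i * gf j i = 1 := by
    intro j i; by_cases h : i = j <;> simp [hgf, h]
  have hsymdiag : ∀ j : Fin 3, ∀ x : R3, u₀ (diagCLM (gf j) x) = u₀ x := by
    intro j x
    rw [hrad (diagCLM (gf j) x), hrad x]
    congr 2
    apply Finset.sum_congr rfl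
    intro k _
    by_cases h : k = j <;> simp [hgf, h] <;> ring
  have hsymperm : ∀ σ : Equiv.Perm (Fin 3), ∀ x : R3, u₀ (permCLM σ x) = u₀ x := by
    intro σ x
    rw [hrad (permCLM σ x), hrad x]
    congr 2
    simpa using Equiv.sum_comp σ (fun k => x k ^ 2)
  -- pd symmetries
  have pd_diag : ∀ j i : Fin 3, ∀ z : R3,
      pd i u₀ z = gf j i * pd i u₀ (diagCLM (gf j) z) := by
    intro j i z
    have h := fderiv_comp_linear u₀ hud (diagCLM (gf j)) (hsymdiag j) z (Pi.single i 1)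
    rw [pd, h, diagCLM_single]
    have hs : (Pi.single i (gf j i) : R3) = gf j i • (Pi.single i 1 : R3) := by
      funext k; by_cases h' : k = i <;> simp [h', Pi.single_apply]
    rw [hs, _root_.map_smul, smul_eq_mul, pd]
  have pd_diag' : ∀ j i : Fin 3, ∀ z : R3,
      pd i u₀ (diagCLM (gf j) z) = gf j i * pd i u₀ z := by
    intro j i z
    calc pd i u₀ (diagCLM (gf j) z)
        = (gf j i * gf j i) * pd i u₀ (diagCLM (gf j) z) := by rw [hgfsq, one_mul]
      _ = gf j i * pd i u₀ z := by rw [mul_assoc, ← pd_diag j i z]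
  have pd_swap : ∀ i : Fin 3, ∀ z : R3,
      pd 0 u₀ z = pd i u₀ (permCLM (Equiv.swap 0 i) z) := by
    intro i z
    have h := fderiv_comp_linear u₀ hud (permCLM (Equiv.swap 0 i))
      (hsymperm _) z (Pi.single 0 1)
    rw [pd, h, permCLM_single]
    simp [pd, Equiv.symm_swap, Equiv.swap_apply_left]
  -- equal integrals of squared partials
  have int_swap : ∀ i : Fin 3, i ≠ 0 →
      (∫ x : R3, (pd 0 u₀ x) ^ 2) = ∫ x : R3, (pd i u₀ x) ^ 2 := by
    intro i hi
    have hdet1 : |LinearMap.det (permL (Equiv.swap 0 i))| = 1 := det_permL_swap i hi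
    have hdet0 : LinearMap.det (permL (Equiv.swap 0 i)) ≠ 0 := by
      intro h; rw [h] at hdet1; simp at hdet1
    have hcov := integral_comp_linear (permL (Equiv.swap 0 i)) hdet0
      (fun z => (pd i u₀ z) ^ 2) ((contpd i).pow 2)
    rw [hdet1, inv_one, one_mul] at hcov
    rw [← hcov]
    apply integral_congr_ae
    filter_upwards with x
    rw [pd_swap i x]
    rfl
  -- the affine substitution
  set gA : Fin 3 → ℝ := fun k => if k = 0 then γ else 1 with hgA
  set y : R3 → R3 := fun x => diagCLM gA x + Pi.single 0 (-(γ * (v * t))) with hy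
  have hyx : ∀ x : R3, Function.update x 0 (γ * (x 0 - v * t)) = y x := by
    intro x; funext k
    by_cases h : k = 0 <;> simp [hy, hgA, Function.update_apply, h, Pi.single_apply] <;> ring
  have hy_cont : Continuous y := ((diagCLM gA).continuous).add continuous_const
  have hdetA : LinearMap.det (diagL gA) = γ := by
    rw [det_diagL]; simp [hgA]
  have hdetA0 : LinearMap.det (diagL gA) ≠ 0 := by rw [hdetA]; exact hγ0
  have key_cov : ∀ F : R3 → ℝ, Continuous F →
      (∫ x : R3, F (y x)) = γ⁻¹ * ∫ z : R3, F z := by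
    intro F hF
    have h1 : ∀ x : R3, y x = diagL gA (x + Pi.single 0 (-(v * t))) := by
      intro x; funext k
      by_cases h : k = 0 <;> simp [hy, hgA, h, Pi.single_apply] <;> ring
    calc (∫ x : R3, F (y x))
        = ∫ x : R3, (fun z : R3 => F (diagL gA z)) (x + Pi.single 0 (-(v * t))) := by
          apply integral_congr_ae; filter_upwards with x; rw [h1]
      _ = ∫ x : R3, F (diagL gA x) := by
          exact integral_add_right_eq_self (fun z : R3 => F (diagL gA z))
            (Pi.single 0 (-(v * t)))
      _ = |LinearMap.det (diagL gA)|⁻¹ * ∫ z : R3, F z :=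
          integral_comp_linear _ hdetA0 F hF
      _ = γ⁻¹ * ∫ z : R3, F z := by rw [hdetA, abs_of_pos hγpos]
  -- derivative computations
  have pd_uvt : ∀ (i : Fin 3) (x : R3), pd i (uv t) x = gA i * pd i u₀ (y x) := by
    intro i x
    have huvt : uv t = fun x : R3 => u₀ (diagCLM gA x + Pi.single 0 (-(γ * (v * t)))) := by
      funext x; rw [huv t x, hyx x, hy]
    have hA : HasFDerivAt (fun z : R3 => diagCLM gA z + Pi.single 0 (-(γ * (v * t))))
        (diagCLM gA) x := ((diagCLM gA).hasFDerivAt).add_const _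
    have hcomp : HasFDerivAt (uv t) ((fderiv ℝ u₀ (y x)).comp (diagCLM gA)) x := by
      rw [huvt]
      exact (hud (y x)).hasFDerivAt.comp x hA
    rw [pd, hcomp.fderiv]
    show fderiv ℝ u₀ (y x) (diagCLM gA (Pi.single i 1)) = _
    rw [diagCLM_single]
    have hs : (Pi.single i (gA i) : R3) = gA i • (Pi.single i 1 : R3) := by
      funext k; by_cases h' : k = i <;> simp [h', Pi.single_apply]
    rw [hs, _root_.map_smul, smul_eq_mul, pd]
  have deriv_uv : ∀ x : R3, deriv (fun s => uv s x) t = -(γ * v) * pd 0 u₀ (y x) := by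
    intro x
    have hcurve : (fun s => uv s x)
        = fun s : ℝ => u₀ (Function.update x 0 (γ * x 0) + s • (Pi.single 0 (-(γ * v)) : R3)) := by
      funext s; rw [huv s x]; congr 1; funext k
      by_cases h : k = 0 <;> simp [Function.update_apply, h, Pi.single_apply] <;> ring
    have hpt : Function.update x 0 (γ * x 0) + t • (Pi.single 0 (-(γ * v)) : R3) = y x := by
      funext k
      by_cases h : k = 0 <;> simp [hy, hgA, Function.update_apply, h, Pi.single_apply] <;> ring
    have hline : HasDerivAt (fun s : ℝ =>
        Function.update x 0 (γ * x 0) + s • (Pi.single 0 (-(γ * v)) : R3))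
        (Pi.single 0 (-(γ * v)) : R3) t := by
      simpa using ((hasDerivAt_id t).smul_const (Pi.single 0 (-(γ * v)) : R3)).const_add
        (Function.update x 0 (γ * x 0))
    have hD : HasDerivAt (fun s => uv s x)
        (fderiv ℝ u₀ (y x) (Pi.single 0 (-(γ * v)))) t := by
      rw [hcurve]
      have hF : HasFDerivAt u₀ (fderiv ℝ u₀ (y x))
          (Function.update x 0 (γ * x 0) + t • (Pi.single 0 (-(γ * v)) : R3)) := by
        rw [hpt]; exact (hud (y x)).hasFDerivAt
      exact hF.comp_hasDerivAt t hline
    rw [hD.deriv]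
    have hs : (Pi.single 0 (-(γ * v)) : R3) = (-(γ * v)) • (Pi.single 0 1 : R3) := by
      funext k; by_cases h' : k = (0 : Fin 3) <;> simp [h', Pi.single_apply]
    rw [hs, _root_.map_smul, smul_eq_mul, pd]
  have deriv_Sv : ∀ x : R3, deriv (fun s => Sv s x) t = -(ω₀ * γ) := by
    intro x
    have h0 : (fun s => Sv s x) = fun s : ℝ => ω₀ * γ * (v * x 0 - s) := by
      funext s; rw [hSv s x]
    rw [h0]
    have h1 : HasDerivAt (fun s : ℝ => ω₀ * γ * (v * x 0 - s)) (ω₀ * γ * (-1)) t :=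
      ((hasDerivAt_id t).const_sub (v * x 0)).const_mul (ω₀ * γ)
    rw [h1.deriv]; ring
  have pd_Svt : ∀ (i : Fin 3) (x : R3), pd i (Sv t) x = if i = 0 then ω₀ * γ * v else 0 := by
    intro i x
    have hS : Sv t = fun z : R3 => ω₀ * γ * v * z 0 - ω₀ * γ * t := by
      funext z; rw [hSv t z]; ring
    have h0 : HasFDerivAt (fun z : R3 => z 0)
        (ContinuousLinearMap.proj 0 : R3 →L[ℝ] ℝ) x :=
      (ContinuousLinearMap.proj 0 : R3 →L[ℝ] ℝ).hasFDerivAt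
    have h1 : HasFDerivAt (Sv t)
        ((ω₀ * γ * v) • (ContinuousLinearMap.proj 0 : R3 →L[ℝ] ℝ)) x := by
      rw [hS]
      exact (h0.const_mul (ω₀ * γ * v)).sub_const (ω₀ * γ * t)
    rw [pd, h1.fderiv]
    by_cases h : i = 0 <;>
      simp [h, ContinuousLinearMap.smul_apply, ContinuousLinearMap.proj_apply,
        Pi.single_apply]
  -- components 1 and 2 vanish
  have hPodd : ∀ i : Fin 3, i ≠ 0 → P t i = 0 := by
    intro i hi
    rw [hP t i]
    have hgAi : gA i = 1 := by simp [hgA, hi]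
    have hint : ∀ x : R3,
        (deriv (fun s => uv s x) t * pd i (uv t) x
          + deriv (fun s => Sv s x) t * pd i (Sv t) x * (uv t x) ^ 2)
        = -(γ * v) * (pd 0 u₀ (y x) * pd i u₀ (y x)) := by
      intro x
      rw [deriv_uv x, pd_uvt i x, deriv_Sv x, pd_Svt i x, hgAi, if_neg hi]
      ring
    rw [integral_congr_ae (Filter.Eventually.of_forall hint), integral_const_mul]
    have hG : ∫ x : R3, (pd 0 u₀ (y x) * pd i u₀ (y x)) = 0 := by
      set G : R3 → ℝ := fun x => pd 0 u₀ (y x) * pd i u₀ (y x) with hGdef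
      have hGcont : Continuous G := ((contpd 0).comp hy_cont).mul ((contpd i).comp hy_cont)
      have hdet : LinearMap.det (diagL (gf i)) = -1 := by
        rw [det_diagL]
        have e1 : gf i i = -1 := by rw [hgf]; simp
        have e2 : ∀ k : Fin 3, k ≠ i → gf i k = 1 := by
          intro k hk; rw [hgf]; simp [hk]
        have hi12 : i = 1 ∨ i = 2 := by omega
        rcases hi12 with h | h <;> subst h
        · rw [e1, e2 0 (by decide), e2 2 (by decide)]; norm_num
        · rw [e1, e2 0 (by decide), e2 1 (by decide)]; norm_num
      have hcov := integral_comp_linear (diagL (gf i)) (by rw [hdet]; norm_num) G hGcont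
      rw [hdet] at hcov; norm_num at hcov
      have hyR : ∀ x : R3, y (diagL (gf i) x) = diagCLM (gf i) (y x) := by
        intro x; funext k
        have hsk : (Pi.single (0:Fin 3) (-(γ * (v * t))) : R3) k
            = if k = 0 then -(γ * (v * t)) else 0 := by
          simp [Pi.single_apply]
        show gA k * (gf i k * x k) + (Pi.single 0 (-(γ * (v * t))) : R3) k
            = gf i k * (gA k * x k + (Pi.single 0 (-(γ * (v * t))) : R3) k)
        rw [hsk]
        by_cases hk0 : k = 0
        · rw [if_pos hk0]
          have hg1 : gf i k = 1 := by
            rw [hgf]; simp only []; rw [if_neg]; rw [hk0]; exact Ne.symm hi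
          rw [hg1]; ring
        · rw [if_neg hk0]; ring
      have hodd : ∀ x : R3, G (diagL (gf i) x) = -G x := by
        intro x
        have e0 : G (diagL (gf i) x) = pd 0 u₀ (y (diagL (gf i) x)) * pd i u₀ (y (diagL (gf i) x)) := rfl
        rw [e0, hyR x, pd_diag' i 0 (y x), pd_diag' i i (y x)]
        have : gf i 0 = 1 := by simp [hgf, Ne.symm hi]
        rw [this]
        have : gf i i = -1 := by simp [hgf]
        rw [this, hGdef]
        ring
      have h2 : ∫ x : R3, G (diagL (gf i) x) = -∫ x : R3, G x := by
        rw [integral_congr_ae (Filter.Eventually.of_forall hodd), integral_neg]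
      rw [hcov] at h2
      linarith
    rw [hG]; ring
  have hP1 : P t 1 = 0 := hPodd 1 (by decide)
  have hP2 : P t 2 = 0 := hPodd 2 (by decide)
  -- component 0
  have hP0 : P t 0 = -(γ * v * m) := by
    rw [hP t 0]
    have hint : ∀ x : R3,
        (deriv (fun s => uv s x) t * pd 0 (uv t) x
          + deriv (fun s => Sv s x) t * pd 0 (Sv t) x * (uv t x) ^ 2)
        = -(γ ^ 2 * v) * ((fun z : R3 => (pd 0 u₀ z) ^ 2 + ω₀ ^ 2 * (u₀ z) ^ 2) (y x)) := by
      intro x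
      rw [deriv_uv x, pd_uvt 0 x, deriv_Sv x, pd_Svt 0 x, if_pos rfl, huv t x, hyx x]
      have : gA 0 = γ := by simp [hgA]
      rw [this]
      ring
    rw [integral_congr_ae (Filter.Eventually.of_forall hint), integral_const_mul]
    have hFc : Continuous (fun z : R3 => (pd 0 u₀ z) ^ 2 + ω₀ ^ 2 * (u₀ z) ^ 2) :=
      (((contpd 0).pow 2)).add (continuous_const.mul (hu.continuous.pow 2))
    rw [key_cov _ hFc]
    have hsplit : (∫ z : R3, ((pd 0 u₀ z) ^ 2 + ω₀ ^ 2 * (u₀ z) ^ 2))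
        = (∫ z : R3, (pd 0 u₀ z) ^ 2) + ω₀ ^ 2 * ∫ z : R3, (u₀ z) ^ 2 := by
      rw [integral_add (intpd2 0) (intu2.const_mul _), integral_const_mul]
    have h3 : (∫ x : R3, ∑ i, (pd i u₀ x) ^ 2) = 3 * ∫ x : R3, (pd 0 u₀ x) ^ 2 := by
      rw [integral_finset_sum _ (fun i _ => intpd2 i), Fin.sum_univ_three,
        ← int_swap 1 (by decide), ← int_swap 2 (by decide)]
      ring
    have hm' : m = (∫ z : R3, (pd 0 u₀ z) ^ 2) + ω₀ ^ 2 * ∫ z : R3, (u₀ z) ^ 2 := by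
      rw [hm, h3]; ring
    rw [hsplit, ← hm']
    field_simp
  -- nonnegativity of m
  have hmnn : 0 ≤ m := by
    have h1 : 0 ≤ ∫ x : R3, ∑ i, (pd i u₀ x) ^ 2 :=
      integral_nonneg fun x => Finset.sum_nonneg fun i _ => sq_nonneg _
    have h2 : 0 ≤ ∫ x : R3, (u₀ x) ^ 2 := integral_nonneg fun x => sq_nonneg _
    rw [hm]
    nlinarith [sq_nonneg ω₀]
  have hsqrt : Real.sqrt (∑ i, (P t i) ^ 2) = γ * |v| * m := by
    rw [Fin.sum_univ_three, hP0, hP1, hP2]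
    have : (-(γ * v * m)) ^ 2 + 0 ^ 2 + 0 ^ 2 = (γ * v * m) ^ 2 := by ring
    rw [this, Real.sqrt_sq_eq_abs, abs_mul, abs_mul, abs_of_pos hγpos, abs_of_nonneg hmnn]
  refine ⟨hP1, hP2, hP0, hsqrt, ?_⟩
  rw [hsqrt]
  have hvne : |v| ≠ 0 := abs_ne_zero.mpr hv0
  field_simp
end

section
/- Let ω₀, β ∈ ℝ, let W : ℝ → ℝ be continuous with W(0) = 0, let u₀ : ℝ³ → ℝ be continuously differentiable with compact support and radially symmetric, and assume the Pohozaev–Derrick identity ∫W(u₀)dx = ½ω₀²∫u₀²dx − (1/6)∫|∇u₀|²dx − (5/3)ω₀²β² K(u₀). Let v ∈ (−1,1), γ = 1/√(1−v²), and define the boosted soliton fields u_v(t,x) = u₀(γ(x₁−vt), x₂, x₃) and S_v(t,x) = ω₀γ(v x₁ − t). Then for every t ∈ ℝ the matter-field energy E[σ_v] = ½∫_{ℝ³}(|∂ₜu_v|² + |∇u_v|²)dx + ½∫_{ℝ³}((∂ₜS_v)² + |∇S_v|²)u_v² dx + ∫_{ℝ³}W(u_v)dx equals γ m − (5/(3γ))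 ω₀² β² K(u₀), where m = (1/3)∫_{ℝ³}|∇u₀|²dx + ω₀²∫_{ℝ³}u₀²dx. -/
open MeasureTheory Real

/-- A coordinatewise-defined continuous linear map on `R3`. -/
noncomputable def cmap (g : Fin 3 → R3 →L[ℝ] ℝ) : R3 →L[ℝ] R3 :=
  ContinuousLinearMap.pi g

noncomputable def Lmap (γ : ℝ) : R3 →L[ℝ] R3 :=
  cmap (fun j => if j = 0 then γ • ContinuousLinearMap.proj 0 else ContinuousLinearMap.proj j)

lemma Lmap_apply (γ : ℝ) (x : R3) (j : Fin 3) :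
    Lmap γ x j = if j = 0 then γ * x 0 else x j := by
  by_cases h : j = 0 <;> simp [Lmap, cmap, h]

noncomputable def Pmap (σ : Equiv.Perm (Fin 3)) : R3 →L[ℝ] R3 :=
  cmap (fun j => ContinuousLinearMap.proj (σ j))

lemma Pmap_apply (σ : Equiv.Perm (Fin 3)) (x : R3) (j : Fin 3) :
    Pmap σ x j = x (σ j) := by simp [Pmap, cmap]

lemma Lmap_det (γ : ℝ) : (Lmap γ).det = γ := by
  have : (Lmap γ).det = Matrix.det (LinearMap.toMatrix' ((Lmap γ : R3 →ₗ[ℝ] R3))) := by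
    rw [LinearMap.det_toMatrix']
  rw [this, Matrix.det_fin_three]
  simp [LinearMap.toMatrix'_apply, Lmap_apply]

lemma Pmap_det_abs (σ : Equiv.Perm (Fin 3)) : |(Pmap σ).det| = 1 := by
  have : (Pmap σ).det = Matrix.det (LinearMap.toMatrix' ((Pmap σ : R3 →ₗ[ℝ] R3))) := by
    rw [LinearMap.det_toMatrix']
  rw [this]
  have hm : LinearMap.toMatrix' ((Pmap σ : R3 →ₗ[ℝ] R3)) = Equiv.Perm.permMatrix ℝ σ := by
    ext i j
    simp [LinearMap.toMatrix'_apply, Pmap_apply, Equiv.Perm.permMatrix,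
      PEquiv.toMatrix_apply, Equiv.toPEquiv_apply, Pi.single_apply, eq_comm]
  rw [hm, Matrix.det_permutation]
  rcases Int.units_eq_one_or (Equiv.Perm.sign σ) with h | h <;> simp [h]

lemma integral_comp_affine (L : R3 →L[ℝ] R3) (hdet : L.det ≠ 0) (c : R3) (g : R3 → ℝ) :
    ∫ x : R3, g (L x + c) = |L.det|⁻¹ * ∫ y : R3, g y := by
  set e := LinearMap.equivOfDetNeZero (↑L : R3 →ₗ[ℝ] R3) hdet with he
  have hL : ∀ x, e x = L x := by
    intro x
    exact DFunLike.congr_fun (LinearEquiv.coe_ofIsUnitDet _) x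
  set f : R3 → R3 := fun x => L x + c with hf
  have hinj : Set.InjOn f Set.univ := by
    intro a _ b _ hab
    have h1 : L a = L b := by simpa [hf] using hab
    have h2 : e a = e b := by rw [hL, hL]; exact h1
    exact e.injective h2
  have himg : f '' Set.univ = Set.univ := by
    apply Set.eq_univ_of_univ_subset
    intro y _
    refine ⟨e.symm (y - c), trivial, ?_⟩
    have h3 : L (e.symm (y - c)) = y - c := by rw [← hL]; simp
    show L (e.symm (y - c)) + c = y
    rw [h3]; abel
  have hder : ∀ x ∈ (Set.univ : Set R3), HasFDerivWithinAt f L Set.univ x := fun x _ =>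
    ((L.hasFDerivAt (x := x)).add_const c).hasFDerivWithinAt
  have key := integral_image_eq_integral_abs_det_fderiv_smul (μ := volume)
    MeasurableSet.univ hder hinj g
  rw [himg] at key
  simp only [Measure.restrict_univ, smul_eq_mul] at key
  have hkey2 : ∫ y : R3, g y = |L.det| * ∫ x : R3, g (L x + c) := by
    rw [key, integral_const_mul]
  rw [hkey2, ← mul_assoc, inv_mul_cancel₀ (abs_ne_zero.mpr hdet), one_mul]

lemma pd_continuous {u : R3 → ℝ} (hu : ContDiff ℝ 1 u) (i : Fin 3) : Continuous (pd i u) := by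
  show Continuous fun x => fderiv ℝ u x (Pi.single i 1)
  exact (hu.continuous_fderiv one_ne_zero).clm_apply continuous_const

lemma pd_hcs {u : R3 → ℝ} (hs : HasCompactSupport u) (i : Fin 3) :
    HasCompactSupport (pd i u) := by
  show HasCompactSupport fun x => fderiv ℝ u x (Pi.single i 1)
  exact hs.fderiv_apply (𝕜 := ℝ) (Pi.single i 1)

lemma integrable_sq_cs {g : R3 → ℝ} (hc : Continuous g) (hs : HasCompactSupport g) :
    Integrable (fun x : R3 => (g x) ^ 2) := by
  refine (hc.pow 2).integrable_of_hasCompactSupport ?_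
  refine hs.mono' ?_
  intro x hx
  apply subset_tsupport
  intro h0
  apply hx
  simp [h0]

lemma integral_pd_sq_perm {u : R3 → ℝ} (hu : ContDiff ℝ 1 u)
    (f : ℝ → ℝ) (hrad : ∀ x : R3, u x = f (Real.sqrt (∑ i, (x i) ^ 2)))
    (i : Fin 3) :
    ∫ x : R3, (pd i u x) ^ 2 = ∫ x : R3, (pd 0 u x) ^ 2 := by
  set σ := Equiv.swap (0 : Fin 3) i with hσ
  have hdiff := hu.differentiable one_ne_zero
  have hcomp : ∀ x : R3, u (Pmap σ x) = u x := by
    intro x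
    rw [hrad, hrad]
    congr 2
    simp only [Pmap_apply]
    exact Equiv.sum_comp σ (fun j => x j ^ 2)
  have hkey : ∀ x : R3, pd i u x = pd 0 u (Pmap σ x) := by
    intro x
    have hP : HasFDerivAt (fun y => u (Pmap σ y))
        ((fderiv ℝ u (Pmap σ x)).comp (Pmap σ)) x :=
      (hdiff (Pmap σ x)).hasFDerivAt.comp x ((Pmap σ).hasFDerivAt)
    have he : (fun y => u (Pmap σ y)) = u := funext hcomp
    rw [he] at hP
    have hfd : fderiv ℝ u x = (fderiv ℝ u (Pmap σ x)).comp (Pmap σ) := hP.fderiv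
    show fderiv ℝ u x (Pi.single i 1) = pd 0 u (Pmap σ x)
    rw [hfd, ContinuousLinearMap.comp_apply]
    have hsingle : Pmap σ (Pi.single i 1) = Pi.single (0 : Fin 3) 1 := by
      funext j
      rw [Pmap_apply]
      by_cases h : j = 0
      · subst h; simp [hσ, Equiv.swap_apply_left, Pi.single_apply]
      · have h2 : σ j ≠ i := by
          intro hc
          apply h
          have := congrArg σ hc
          simpa [hσ, Equiv.swap_apply_right] using this
        simp [Pi.single_apply, h, h2]
    rw [hsingle]
    rfl
  have hdet : (Pmap σ).det ≠ 0 := by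
    intro h0
    have := Pmap_det_abs σ
    rw [h0] at this
    norm_num at this
  have hcv := integral_comp_affine (Pmap σ) hdet 0 (fun y => (pd 0 u y) ^ 2)
  simp only [add_zero, Pmap_det_abs, inv_one, one_mul] at hcv
  simp_rw [hkey]
  exact hcv

/-- under the Pohozaev–Derrick identity, the matter-field energy
`E[σ_v] = ½∫(|∂ₜu_v|² + |∇u_v|²) + ½∫((∂ₜS_v)² + |∇S_v|²)u_v² + ∫W(u_v)` of the boosted
soliton equals `γm − (5/(3γ))ω₀²β²K(u₀)`, where `m = (1/3)∫|∇u₀|² + ω₀²∫u₀²`. -/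
theorem energy_of_moving_soliton
    (ω₀ β : ℝ) (W : ℝ → ℝ) (hWc : Continuous W) (hW0 : W 0 = 0)
    (u₀ : R3 → ℝ) (hu : ContDiff ℝ 1 u₀) (hsupp : HasCompactSupport u₀)
    (f : ℝ → ℝ) (hrad : ∀ x : R3, u₀ x = f (Real.sqrt (∑ i, (x i) ^ 2)))
    (hPoho : (∫ x : R3, W (u₀ x)) =
      (1 / 2) * ω₀ ^ 2 * (∫ x : R3, (u₀ x) ^ 2)
        - (1 / 6) * (∫ x : R3, ∑ i, (pd i u₀ x) ^ 2)
        - (5 / 3) * ω₀ ^ 2 * β ^ 2 * coulomb u₀)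
    (v : ℝ) (hv : v ∈ Set.Ioo (-1 : ℝ) 1)
    (γ : ℝ) (hγ : γ = 1 / Real.sqrt (1 - v ^ 2))
    (uv Sv : ℝ → R3 → ℝ)
    (huv : ∀ t : ℝ, ∀ x : R3, uv t x = u₀ (Function.update x 0 (γ * (x 0 - v * t))))
    (hSv : ∀ t : ℝ, ∀ x : R3, Sv t x = ω₀ * γ * (v * x 0 - t))
    (m : ℝ)
    (hm : m = (1 / 3) * (∫ x : R3, ∑ i, (pd i u₀ x) ^ 2) + ω₀ ^ 2 * ∫ x : R3, (u₀ x) ^ 2) :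
    ∀ t : ℝ,
      (1 / 2) * (∫ x : R3,
          ((deriv (fun s => uv s x) t) ^ 2 + ∑ i, (pd i (uv t) x) ^ 2))
        + (1 / 2) * (∫ x : R3,
            ((deriv (fun s => Sv s x) t) ^ 2 + ∑ i, (pd i (Sv t) x) ^ 2) * (uv t x) ^ 2)
        + (∫ x : R3, W (uv t x))
      = γ * m - (5 / (3 * γ)) * ω₀ ^ 2 * β ^ 2 * coulomb u₀ := by
  intro t
  obtain ⟨hv1, hv2⟩ := hv
  have hv2' : v ^ 2 < 1 := by nlinarith
  have h1v : 0 < 1 - v ^ 2 := by linarith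
  have hγ0 : 0 < γ := by rw [hγ]; positivity
  have hγne : γ ≠ 0 := ne_of_gt hγ0
  have hγsq : γ ^ 2 * (1 - v ^ 2) = 1 := by
    rw [hγ, div_pow, one_pow, sq_sqrt h1v.le]
    field_simp
  have hdiff := hu.differentiable one_ne_zero
  set c : R3 := Pi.single (0 : Fin 3) (-(γ * v * t)) with hc
  set d : R3 := Pi.single (0 : Fin 3) (-(γ * v)) with hd
  have hdetL : (Lmap γ).det = γ := Lmap_det γ
  have hdetLne : (Lmap γ).det ≠ 0 := by rw [hdetL]; exact hγne
  have hAt : ∀ x : R3, Function.update x 0 (γ * (x 0 - v * t)) = Lmap γ x + c := by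
    intro x
    funext j
    rcases eq_or_ne j 0 with h | h
    · subst h
      simp [Function.update_apply, Lmap_apply, hc, Pi.single_apply]
      ring
    · simp [Function.update_apply, h, Lmap_apply, hc, Pi.single_apply]
  have hpath : ∀ x : R3, ∀ s : ℝ, Function.update x 0 (γ * (x 0 - v * s))
      = Lmap γ x + s • d := by
    intro x s
    funext j
    rcases eq_or_ne j 0 with h | h
    · subst h
      simp [Function.update_apply, Lmap_apply, hd, Pi.single_apply]
      ring
    · simp [Function.update_apply, h, Lmap_apply, hd, Pi.single_apply]
  have htd : t • d = c := by
    funext j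
    rcases eq_or_ne j 0 with h | h
    · subst h; simp [hd, hc, Pi.single_apply]; ring
    · simp [hd, hc, Pi.single_apply, h]
  -- time derivative of uv
  have hderiv_uv : ∀ x : R3,
      deriv (fun s => uv s x) t = -(γ * v) * pd 0 u₀ (Lmap γ x + c) := by
    intro x
    have hfun : (fun s => uv s x) = fun s => u₀ (Lmap γ x + s • d) := by
      funext s; rw [huv s x, hpath x s]
    rw [hfun]
    have hp : HasDerivAt (fun s : ℝ => Lmap γ x + s • d) d t := by
      simpa using ((hasDerivAt_id t).smul_const d).const_add (Lmap γ x)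
    have hD : HasDerivAt (fun s => u₀ (Lmap γ x + s • d))
        ((fderiv ℝ u₀ (Lmap γ x + t • d)) d) t :=
      (hdiff (Lmap γ x + t • d)).hasFDerivAt.comp_hasDerivAt t hp
    rw [hD.deriv]
    have hd1 : (d : R3) = (-(γ * v)) • (Pi.single (0 : Fin 3) 1 : R3) := by
      funext j
      rcases eq_or_ne j 0 with h | h
      · subst h; simp [hd, Pi.single_apply]
      · simp [hd, Pi.single_apply, h]
    rw [htd, hd1, ContinuousLinearMap.map_smul]
    simp [pd, smul_eq_mul]
  -- space derivatives of uv
  have hpduv : ∀ (i : Fin 3) (x : R3),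
      pd i (uv t) x = (if i = 0 then γ else 1) * pd i u₀ (Lmap γ x + c) := by
    intro i x
    have hfun : uv t = fun y => u₀ (Lmap γ y + c) := by
      funext y; rw [huv t y, hAt y]
    have hF : HasFDerivAt (fun y => u₀ (Lmap γ y + c))
        ((fderiv ℝ u₀ (Lmap γ x + c)).comp (Lmap γ)) x :=
      (hdiff (Lmap γ x + c)).hasFDerivAt.comp x (((Lmap γ).hasFDerivAt).add_const c)
    have hF' : HasFDerivAt (uv t) ((fderiv ℝ u₀ (Lmap γ x + c)).comp (Lmap γ)) x := by
      rw [hfun]; exact hF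
    show fderiv ℝ (uv t) x (Pi.single i 1) = _
    rw [hF'.fderiv, ContinuousLinearMap.comp_apply]
    have hsingle : Lmap γ (Pi.single i 1)
        = (if i = 0 then γ else 1) • (Pi.single i 1 : R3) := by
      funext j
      rw [Lmap_apply]
      by_cases hj : j = 0 <;> by_cases hi : i = 0 <;>
        simp [hj, hi, Pi.single_apply] <;> simp [Ne.symm hi]
    rw [hsingle, ContinuousLinearMap.map_smul]
    simp [pd, smul_eq_mul]
  -- derivatives of Sv
  have hderiv_Sv : ∀ x : R3, deriv (fun s => Sv s x) t = -(ω₀ * γ) := by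
    intro x
    have hfun : (fun s => Sv s x) = fun s => ω₀ * γ * (v * x 0 - s) :=
      funext fun s => hSv s x
    rw [hfun]
    have h := ((hasDerivAt_const t (v * x 0)).sub (hasDerivAt_id t)).const_mul (ω₀ * γ)
    have h2 := h.deriv
    simpa using h2
  have hpdSv : ∀ (i : Fin 3) (x : R3),
      pd i (Sv t) x = if i = 0 then ω₀ * γ * v else 0 := by
    intro i x
    have hfun : Sv t = fun y : R3 => ω₀ * γ * v * y 0 - ω₀ * γ * t := by
      funext y; rw [hSv t y]; ring
    have h0 := (ContinuousLinearMap.proj (R := ℝ) (φ := fun _ : Fin 3 => ℝ)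
      (0 : Fin 3)).hasFDerivAt (x := x)
    have hF := (h0.const_mul (ω₀ * γ * v)).sub_const (ω₀ * γ * t)
    have hF' : HasFDerivAt (Sv t)
        ((ω₀ * γ * v) • ContinuousLinearMap.proj (R := ℝ) (φ := fun _ : Fin 3 => ℝ)
          (0 : Fin 3)) x := by
      rw [hfun]; exact hF
    show fderiv ℝ (Sv t) x (Pi.single i 1) = _
    rw [hF'.fderiv]
    by_cases hi : i = 0
    · subst hi; simp [Pi.single_apply]
    · simp [Pi.single_apply, hi, Ne.symm hi]
  -- integrability
  have hpdc : ∀ i : Fin 3, Continuous (pd i u₀) := pd_continuous hu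
  have hpds : ∀ i : Fin 3, HasCompactSupport (pd i u₀) := pd_hcs hsupp
  have hIntPd : ∀ i : Fin 3, Integrable (fun x : R3 => (pd i u₀ x) ^ 2) :=
    fun i => integrable_sq_cs (hpdc i) (hpds i)
  have hIntU : Integrable (fun x : R3 => (u₀ x) ^ 2) :=
    integrable_sq_cs hu.continuous hsupp
  -- the three transformed integrals
  have hI1 : (∫ x : R3, ((deriv (fun s => uv s x) t) ^ 2 + ∑ i, (pd i (uv t) x) ^ 2))
      = γ⁻¹ * ((γ ^ 2 * v ^ 2 + γ ^ 2) * (∫ x : R3, (pd 0 u₀ x) ^ 2)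
          + ((∫ x : R3, (pd 1 u₀ x) ^ 2) + (∫ x : R3, (pd 2 u₀ x) ^ 2))) := by
    have hpt : ∀ x : R3, (deriv (fun s => uv s x) t) ^ 2 + ∑ i, (pd i (uv t) x) ^ 2
        = (γ ^ 2 * v ^ 2 + γ ^ 2) * (pd 0 u₀ (Lmap γ x + c)) ^ 2
          + ((pd 1 u₀ (Lmap γ x + c)) ^ 2 + (pd 2 u₀ (Lmap γ x + c)) ^ 2) := by
      intro x
      rw [Fin.sum_univ_three, hderiv_uv x, hpduv 0 x, hpduv 1 x, hpduv 2 x]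
      rw [if_pos rfl, if_neg (by decide : (1 : Fin 3) ≠ 0),
        if_neg (by decide : (2 : Fin 3) ≠ 0)]
      ring
    have hcv := integral_comp_affine (Lmap γ) hdetLne c
      (fun y => (γ ^ 2 * v ^ 2 + γ ^ 2) * (pd 0 u₀ y) ^ 2
        + ((pd 1 u₀ y) ^ 2 + (pd 2 u₀ y) ^ 2))
    calc (∫ x : R3, ((deriv (fun s => uv s x) t) ^ 2 + ∑ i, (pd i (uv t) x) ^ 2))
        = ∫ x : R3, ((γ ^ 2 * v ^ 2 + γ ^ 2) * (pd 0 u₀ (Lmap γ x + c)) ^ 2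
            + ((pd 1 u₀ (Lmap γ x + c)) ^ 2 + (pd 2 u₀ (Lmap γ x + c)) ^ 2)) := by
          exact integral_congr_ae (Filter.Eventually.of_forall hpt)
      _ = |(Lmap γ).det|⁻¹ * ∫ y : R3, ((γ ^ 2 * v ^ 2 + γ ^ 2) * (pd 0 u₀ y) ^ 2
            + ((pd 1 u₀ y) ^ 2 + (pd 2 u₀ y) ^ 2)) := hcv
      _ = γ⁻¹ * ((γ ^ 2 * v ^ 2 + γ ^ 2) * (∫ x : R3, (pd 0 u₀ x) ^ 2)
            + ((∫ x : R3, (pd 1 u₀ x) ^ 2) + (∫ x : R3, (pd 2 u₀ x) ^ 2))) := by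
          rw [hdetL, abs_of_pos hγ0]
          congr 1
          have h1 : Integrable (fun x : R3 =>
              (γ ^ 2 * v ^ 2 + γ ^ 2) * (pd 0 u₀ x) ^ 2) := (hIntPd 0).const_mul _
          have h2 : Integrable (fun x : R3 => (pd 1 u₀ x) ^ 2 + (pd 2 u₀ x) ^ 2) :=
            (hIntPd 1).add (hIntPd 2)
          rw [integral_add h1 h2, integral_const_mul, integral_add (hIntPd 1) (hIntPd 2)]
  have hI2 : (∫ x : R3, ((deriv (fun s => Sv s x) t) ^ 2
        + ∑ i, (pd i (Sv t) x) ^ 2) * (uv t x) ^ 2)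
      = γ⁻¹ * ((ω₀ ^ 2 * γ ^ 2 + ω₀ ^ 2 * γ ^ 2 * v ^ 2) * (∫ x : R3, (u₀ x) ^ 2)) := by
    have hpt : ∀ x : R3, ((deriv (fun s => Sv s x) t) ^ 2
          + ∑ i, (pd i (Sv t) x) ^ 2) * (uv t x) ^ 2
        = (ω₀ ^ 2 * γ ^ 2 + ω₀ ^ 2 * γ ^ 2 * v ^ 2) * (u₀ (Lmap γ x + c)) ^ 2 := by
      intro x
      rw [Fin.sum_univ_three, hderiv_Sv x, hpdSv 0 x, hpdSv 1 x, hpdSv 2 x,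
        huv t x, hAt x]
      rw [if_pos rfl, if_neg (by decide : (1 : Fin 3) ≠ 0),
        if_neg (by decide : (2 : Fin 3) ≠ 0)]
      ring
    have hcv := integral_comp_affine (Lmap γ) hdetLne c
      (fun y => (ω₀ ^ 2 * γ ^ 2 + ω₀ ^ 2 * γ ^ 2 * v ^ 2) * (u₀ y) ^ 2)
    calc (∫ x : R3, ((deriv (fun s => Sv s x) t) ^ 2
          + ∑ i, (pd i (Sv t) x) ^ 2) * (uv t x) ^ 2)
        = ∫ x : R3, (ω₀ ^ 2 * γ ^ 2 + ω₀ ^ 2 * γ ^ 2 * v ^ 2) * (u₀ (Lmap γ x + c)) ^ 2 :=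
          integral_congr_ae (Filter.Eventually.of_forall hpt)
      _ = γ⁻¹ * ((ω₀ ^ 2 * γ ^ 2 + ω₀ ^ 2 * γ ^ 2 * v ^ 2) * (∫ x : R3, (u₀ x) ^ 2)) := by
          rw [hcv, hdetL, abs_of_pos hγ0, integral_const_mul]
  have hI3 : (∫ x : R3, W (uv t x)) = γ⁻¹ * ∫ x : R3, W (u₀ x) := by
    have hpt : ∀ x : R3, W (uv t x) = W (u₀ (Lmap γ x + c)) := by
      intro x; rw [huv t x, hAt x]
    have hcv := integral_comp_affine (Lmap γ) hdetLne c (fun y => W (u₀ y))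
    calc (∫ x : R3, W (uv t x)) = ∫ x : R3, W (u₀ (Lmap γ x + c)) :=
          integral_congr_ae (Filter.Eventually.of_forall hpt)
      _ = γ⁻¹ * ∫ x : R3, W (u₀ x) := by rw [hcv, hdetL, abs_of_pos hγ0]
  -- radial symmetry
  have hP1 := integral_pd_sq_perm hu f hrad 1
  have hP2 := integral_pd_sq_perm hu f hrad 2
  have hD : (∫ x : R3, ∑ i, (pd i u₀ x) ^ 2) = 3 * ∫ x : R3, (pd 0 u₀ x) ^ 2 := by
    have : (∫ x : R3, ∑ i, (pd i u₀ x) ^ 2)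
        = ∫ x : R3, ((pd 0 u₀ x) ^ 2 + (pd 1 u₀ x) ^ 2 + (pd 2 u₀ x) ^ 2) := by
      apply integral_congr_ae
      exact Filter.Eventually.of_forall fun x => by simp [Fin.sum_univ_three]
    have h1 : Integrable (fun x : R3 => (pd 0 u₀ x) ^ 2 + (pd 1 u₀ x) ^ 2) :=
      (hIntPd 0).add (hIntPd 1)
    rw [this, integral_add h1 (hIntPd 2), integral_add (hIntPd 0) (hIntPd 1), hP1, hP2]
    ring
  -- final algebra
  rw [hI1, hI2, hI3, hP1, hP2, hPoho, hm, hD]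
  have hγinv : γ⁻¹ = γ * (1 - v ^ 2) :=
    inv_eq_of_mul_eq_one_right (by linear_combination hγsq)
  have h5 : (5 : ℝ) / (3 * γ) = 5 / 3 * (γ * (1 - v ^ 2)) := by
    rw [div_eq_iff (by positivity : (3 : ℝ) * γ ≠ 0)]
    linear_combination (-5 : ℝ) * hγsq
  rw [hγinv, h5]
  linear_combination (γ / 2 * (1 + v ^ 2) * ((∫ x : R3, (pd 0 u₀ x) ^ 2)
    + ω₀ ^ 2 * ∫ x : R3, (u₀ x) ^ 2)) * hγsq
end
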